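/- arXiv:2601.21121 — 3 statements merged into one kernel-verified Lean document; each statement's English description precedes it below -/
import Mathlib

section
/- Let m ∈ ℤ_{>0} be a divisor of ρ₀. If d_q = d_m for every q ∈ ℤ_{>0} with gcd(q, ρ₀) = m, then m does not divide the first elementary divisor e_{1,E} of G = G_E. -/
open scoped BigOperators

namespace ArrCode

variable {k n : ℕ}

/-- The integer matrix `G` with entries reduced modulo `q`. -/
def Gmod (G : Matrix (Fin k) (Fin n) ℤ) (q : ℕ) : Matrix (Fin k) (Fin n) (ZMod q) :=
  G.map (Int.cast : ℤ → ZMod q)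

/-- The code `C_G(q)` over `ℤ/qℤ` generated by the rows of `G`. -/
def code (G : Matrix (Fin k) (Fin n) ℤ) (q : ℕ) : Set (Fin n → ZMod q) :=
  Set.range fun u : Fin k → ZMod q => Matrix.vecMul u (Gmod G q)

/-- `H_J(q) = { u ∈ (ℤ/qℤ)^k : u · g^j = 0 for all j ∈ J }`. -/
def HJ (G : Matrix (Fin k) (Fin n) ℤ) (J : Finset (Fin n)) (q : ℕ) :
    Set (Fin k → ZMod q) :=
  {u | ∀ j ∈ J, Matrix.vecMul u (Gmod G q) j = 0}

/-- The rank `r(J)` over `ℚ` of the column submatrix `G_J`. -/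
noncomputable def rk (G : Matrix (Fin k) (Fin n) ℤ) (J : Finset (Fin n)) : ℕ :=
  Matrix.rank (Matrix.of fun (i : Fin k) (j : J) => (G i j.1 : ℚ))

/-- The gcd of all `j × j` minors of the column submatrix `G_J`
(determinants of submatrices with repeated rows or columns vanish,
so this agrees with the usual minor gcd). -/
def minorGcd (G : Matrix (Fin k) (Fin n) ℤ) (J : Finset (Fin n)) (j : ℕ) : ℕ :=
  Finset.gcd Finset.univ fun p : (Fin j → Fin k) × (Fin j → J) =>
    ((G.submatrix p.1 fun l => (p.2 l : Fin n)).det).natAbs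

/-- The `ℓ`-th elementary divisor (invariant factor) `e_{ℓ,J}` of `G_J`,
characterized by `e_{1,J} ⋯ e_{j,J} =` gcd of all `j × j` minors of `G_J`. -/
def elemDiv (G : Matrix (Fin k) (Fin n) ℤ) (J : Finset (Fin n)) (ℓ : ℕ) : ℕ :=
  minorGcd G J ℓ / minorGcd G J (ℓ - 1)

/-- The lcm period `ρ₀ = lcm { e_{r(J),J} : ∅ ≠ J ⊆ E }`. -/
noncomputable def lcmPeriod (G : Matrix (Fin k) (Fin n) ℤ) : ℕ :=
  Finset.lcm ((Finset.univ : Finset (Fin n)).powerset.filter fun J => J ≠ ∅)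
    fun J => elemDiv G J (rk G J)

/-- The minimum weight `d_q` of `C_G(q)` (equal to `+∞` when the code is trivial). -/
noncomputable def minWt (G : Matrix (Fin k) (Fin n) ℤ) (q : ℕ) : ℕ∞ :=
  ⨅ (c : Fin n → ZMod q) (_ : c ∈ code G q) (_ : c ≠ 0), (hammingNorm c : ℕ∞)

/-- `A_{G,i}(q)`: the number of codewords of `C_G(q)` of Hamming weight `i`. -/
noncomputable def A (G : Matrix (Fin k) (Fin n) ℤ) (q i : ℕ) : ℕ :=
  {c ∈ code G q | hammingNorm c = i}.ncard

/-- The characteristic quasi-polynomial value: the number of `u ∈ (ℤ/qℤ)^k`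
with every coordinate of `uG` nonzero. -/
noncomputable def chiQuasi (G : Matrix (Fin k) (Fin n) ℤ) (q : ℕ) : ℕ :=
  {u : Fin k → ZMod q | ∀ j, Matrix.vecMul u (Gmod G q) j ≠ 0}.ncard

/-- `Π_{ℓ=1}^{r(J)} gcd(m, e_{ℓ,J})`. -/
noncomputable def gcdProd (G : Matrix (Fin k) (Fin n) ℤ) (m : ℕ) (J : Finset (Fin n)) : ℕ :=
  ∏ ℓ ∈ Finset.Icc 1 (rk G J), Nat.gcd m (elemDiv G J ℓ)

/-- The constituent polynomial `f_i^m(t) ∈ ℚ[t]`. -/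
noncomputable def fPoly (G : Matrix (Fin k) (Fin n) ℤ) (m i : ℕ) : Polynomial ℚ :=
  ∑ J ∈ (Finset.univ : Finset (Fin n)).powerset.filter (fun J => J.card = n - i),
    ∑ K ∈ (Finset.univ : Finset (Fin n)).powerset.filter (fun K => J ⊆ K),
      Polynomial.C ((-1 : ℚ) ^ (K.card - J.card) *
          (gcdProd G m K : ℚ) / (gcdProd G m Finset.univ : ℚ)) *
        Polynomial.X ^ (rk G Finset.univ - rk G K)

/-- `d'_m`: the least positive `i` such that `f_i^m` is not the zero polynomial. -/
noncomputable def dPrime (G : Matrix (Fin k) (Fin n) ℤ) (m : ℕ) : ℕ :=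
  sInf {i : ℕ | 0 < i ∧ fPoly G m i ≠ 0}

end ArrCode

namespace ArrCode

open Matrix Submodule

variable {k n : ℕ}

lemma exists_indep_rows {m α : Type*} [Fintype m] [Fintype α]
    (A : Matrix m α ℚ) {r : ℕ} (hr : A.rank = r) :
    ∃ p : Fin r → m, LinearIndependent ℚ (fun i => A (p i)) := by
  classical
  obtain ⟨b, hbsub, hbspan, hbind⟩ := exists_linearIndependent ℚ (Set.range A)
  have hbfin : b.Finite := (Set.finite_range A).subset hbsub
  haveI : Fintype b := hbfin.fintype
  have hcard : b.toFinset.card = r := by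
    rw [← finrank_span_set_eq_card hbind, hbspan]
    exact (Matrix.rank_eq_finrank_span_row A).symm.trans hr
  let e : Fin r ≃ b.toFinset := (b.toFinset.equivFinOfCardEq hcard).symm
  have hmem : ∀ i : Fin r, ((e i : α → ℚ)) ∈ Set.range A := fun i =>
    hbsub (Set.mem_toFinset.mp (e i).2)
  choose p hp using hmem
  refine ⟨p, ?_⟩
  have hg : LinearIndependent ℚ (fun i : Fin r =>
      ((⟨(e i : α → ℚ), Set.mem_toFinset.mp (e i).2⟩ : b) : α → ℚ)) := by
    apply hbind.comp
    intro i j hij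
    apply e.injective
    exact Subtype.ext (Subtype.mk_eq_mk.mp hij)
  convert hg using 1
  funext i
  exact hp i

lemma exists_nonzero_minor {m α : Type*} [Fintype m] [Fintype α] [DecidableEq m] [DecidableEq α]
    (A : Matrix m α ℚ) {r : ℕ} (hr : A.rank = r) :
    ∃ (p₁ : Fin r → m) (p₂ : Fin r → α), (A.submatrix p₁ p₂).det ≠ 0 := by
  obtain ⟨p₁, h₁⟩ := exists_indep_rows A hr
  set B : Matrix (Fin r) α ℚ := A.submatrix p₁ id with hB
  have hBrank : Bᵀ.rank = r := by
    rw [Matrix.rank_transpose]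
    have : B.rank = Fintype.card (Fin r) := LinearIndependent.rank_matrix h₁
    simpa using this
  obtain ⟨p₂, h₂⟩ := exists_indep_rows Bᵀ hBrank
  refine ⟨p₁, p₂, ?_⟩
  have hunit : IsUnit (Bᵀ.submatrix p₂ id) :=
    Matrix.linearIndependent_rows_iff_isUnit.mp h₂
  have hdet : (Bᵀ.submatrix p₂ id).det ≠ 0 :=
    ((Matrix.isUnit_iff_isUnit_det _).mp hunit).ne_zero
  have heq : Bᵀ.submatrix p₂ id = (A.submatrix p₁ p₂)ᵀ := by
    ext i j; rfl
  rw [heq, Matrix.det_transpose] at hdet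
  exact hdet

lemma minorGcd_rk_pos (G : Matrix (Fin k) (Fin n) ℤ) (J : Finset (Fin n)) :
    0 < minorGcd G J (rk G J) := by
  classical
  obtain ⟨p₁, p₂, hdet⟩ :=
    exists_nonzero_minor (Matrix.of fun (i : Fin k) (j : J) => (G i j.1 : ℚ)) (rfl : _ = rk G J)
  refine Nat.pos_of_ne_zero fun h0 => hdet ?_
  have hz := (Finset.gcd_eq_zero_iff).mp h0 (p₁, p₂) (Finset.mem_univ _)
  have hz' : (G.submatrix p₁ fun l => ((p₂ l : Fin n))).det = 0 := Int.natAbs_eq_zero.mp hz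
  have hcast : ((Matrix.of fun (i : Fin k) (j : J) => (G i j.1 : ℚ)).submatrix p₁ p₂)
      = (G.submatrix p₁ fun l => ((p₂ l : Fin n))).map ⇑(Int.castRingHom ℚ) := by
    ext i j; rfl
  rw [hcast, ← RingHom.mapMatrix_apply, ← RingHom.map_det, hz']
  simp

lemma minorGcd_dvd (G : Matrix (Fin k) (Fin n) ℤ) (J : Finset (Fin n)) (j : ℕ)
    (p : (Fin j → Fin k) × (Fin j → J)) :
    minorGcd G J j ∣ ((G.submatrix p.1 fun l => ((p.2 l : Fin n))).det).natAbs := by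
  classical
  unfold minorGcd
  exact Finset.gcd_dvd (Finset.mem_univ p)

lemma minorGcd_dvd_succ (G : Matrix (Fin k) (Fin n) ℤ) (J : Finset (Fin n)) (j : ℕ) :
    minorGcd G J j ∣ minorGcd G J (j + 1) := by
  classical
  have key : ∀ p : (Fin (j + 1) → Fin k) × (Fin (j + 1) → J),
      minorGcd G J j ∣ ((G.submatrix p.1 fun l => ((p.2 l : Fin n))).det).natAbs := by
    intro p
    rw [← Int.natAbs_natCast (minorGcd G J j)]
    apply Int.natAbs_dvd_natAbs.mpr
    rw [Matrix.det_succ_row_zero]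
    apply Finset.dvd_sum
    intro j' _
    have hd : (minorGcd G J j : ℤ) ∣
        ((G.submatrix p.1 fun l => ((p.2 l : Fin n))).submatrix Fin.succ j'.succAbove).det := by
      have hsub : (G.submatrix p.1 fun l => ((p.2 l : Fin n))).submatrix Fin.succ j'.succAbove
          = G.submatrix (p.1 ∘ Fin.succ) fun l => (((p.2 ∘ j'.succAbove) l : Fin n)) := by
        rw [Matrix.submatrix_submatrix]; rfl
      rw [hsub]
      have hg := minorGcd_dvd G J j (p.1 ∘ Fin.succ, p.2 ∘ j'.succAbove)
      exact Int.dvd_natAbs.mp (Int.natCast_dvd_natCast.mpr hg)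
    exact hd.mul_left _
  unfold minorGcd
  exact Finset.dvd_gcd fun p _ => key p

lemma minorGcd_zero (G : Matrix (Fin k) (Fin n) ℤ) (J : Finset (Fin n)) :
    minorGcd G J 0 = 1 := by
  classical
  have h := minorGcd_dvd G J 0 (Fin.elim0, Fin.elim0)
  simpa [Matrix.det_fin_zero, Nat.dvd_one] using h

lemma elemDiv_rk_pos (G : Matrix (Fin k) (Fin n) ℤ) (J : Finset (Fin n)) :
    0 < elemDiv G J (rk G J) := by
  rcases Nat.eq_zero_or_pos (rk G J) with h | h
  · rw [h]; unfold elemDiv; simp [minorGcd_zero]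
  · have hr : rk G J - 1 + 1 = rk G J := Nat.succ_pred_eq_of_pos h
    have hdvd : minorGcd G J (rk G J - 1) ∣ minorGcd G J (rk G J) := by
      conv_rhs => rw [← hr]
      exact minorGcd_dvd_succ G J (rk G J - 1)
    have hpos := minorGcd_rk_pos G J
    exact Nat.div_pos (Nat.le_of_dvd hpos hdvd) (Nat.pos_of_dvd_of_pos hdvd hpos)

lemma lcmPeriod_pos (G : Matrix (Fin k) (Fin n) ℤ) : 0 < lcmPeriod G := by
  refine Nat.pos_of_ne_zero fun h0 => ?_
  rw [lcmPeriod, Finset.lcm_eq_zero_iff] at h0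
  obtain ⟨J, -, hzero⟩ := h0
  exact (elemDiv_rk_pos G J).ne' hzero

lemma minorGcd_one_dvd (G : Matrix (Fin k) (Fin n) ℤ) (i : Fin k) (j : Fin n) :
    minorGcd G Finset.univ 1 ∣ (G i j).natAbs := by
  classical
  have h := minorGcd_dvd G Finset.univ 1
    ((fun _ => i), fun _ => (⟨j, Finset.mem_univ j⟩ : (Finset.univ : Finset (Fin n))))
  simpa [Matrix.det_fin_one] using h

lemma minWt_eq_top (G : Matrix (Fin k) (Fin n) ℤ) (q : ℕ)
    (h : ∀ i j, (q : ℤ) ∣ G i j) : minWt G q = ⊤ := by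
  have hG0 : Gmod G q = 0 := by
    ext i j
    exact (ZMod.intCast_zmod_eq_zero_iff_dvd _ _).mpr (h i j)
  rw [minWt, iInf_eq_top]
  intro c
  rw [iInf_eq_top]
  intro hc
  rw [iInf_eq_top]
  intro hne
  exfalso
  apply hne
  obtain ⟨u, hu⟩ := hc
  rw [← hu, hG0]
  simpa using Matrix.vecMul_zero (v := u)

end ArrCode

namespace ArrCode

theorem stmt2 (k n : ℕ) (hk : 1 ≤ k) (hn : 1 ≤ n) (G : Matrix (Fin k) (Fin n) ℤ)
    (hG : ∀ j : Fin n, ∃ i : Fin k, G i j ≠ 0)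
    (m : ℕ) (hm : 0 < m) (hmdvd : m ∣ lcmPeriod G)
    (hconst : ∀ q : ℕ, 0 < q → Nat.gcd q (lcmPeriod G) = m → minWt G q = minWt G m) :
    ¬ m ∣ elemDiv G Finset.univ 1 := by
  classical
  intro hdvdE
  have hE : elemDiv G Finset.univ 1 = minorGcd G Finset.univ 1 := by
    unfold elemDiv
    simp [minorGcd_zero]
  rw [hE] at hdvdE
  have hentry : ∀ i j, (m : ℤ) ∣ G i j := fun i j =>
    Int.dvd_natAbs.mp (Int.natCast_dvd_natCast.mpr (hdvdE.trans (minorGcd_one_dvd G i j)))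
  have hρ : 0 < lcmPeriod G := lcmPeriod_pos G
  set s := lcmPeriod G / m with hsdef
  have hms : m * s = lcmPeriod G := Nat.mul_div_cancel' hmdvd
  have hspos : 0 < s := by
    rcases Nat.eq_zero_or_pos s with h | h
    · rw [h, mul_zero] at hms; omega
    · exact h
  have hsle : s ≤ lcmPeriod G := Nat.le_of_dvd hρ (Dvd.intro_left m hms)
  let j₀ : Fin n := ⟨0, hn⟩
  obtain ⟨i₀, hi₀⟩ := hG j₀
  set N := (G i₀ j₀).natAbs with hN
  have hNpos : 0 < N := Int.natAbs_pos.mpr hi₀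
  obtain ⟨p, hple, hp⟩ := Nat.exists_infinite_primes (max (lcmPeriod G) N + 1)
  have hpρ : lcmPeriod G < p := lt_of_le_of_lt (le_max_left _ _) (Nat.lt_of_succ_le hple)
  have hpN : N < p := lt_of_le_of_lt (le_max_right _ _) (Nat.lt_of_succ_le hple)
  have hqpos : 0 < m * p := Nat.mul_pos hm hp.pos
  have hcop : Nat.Coprime p s := (hp.coprime_iff_not_dvd).mpr fun hd =>
    absurd (Nat.le_of_dvd hspos hd) (not_le.mpr (lt_of_le_of_lt hsle hpρ))
  have hgcd : Nat.gcd (m * p) (lcmPeriod G) = m := by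
    rw [← hms, Nat.gcd_mul_left, hcop.gcd_eq_one, mul_one]
  have htop : minWt G m = ⊤ := minWt_eq_top G m hentry
  have hq := hconst (m * p) hqpos hgcd
  rw [htop] at hq
  set c : Fin n → ZMod (m * p) := Matrix.vecMul (Pi.single i₀ 1) (Gmod G (m * p)) with hc
  have hcj : c j₀ = ((G i₀ j₀ : ℤ) : ZMod (m * p)) := by
    simp [hc, Gmod, Matrix.vecMul, dotProduct, Pi.single_apply, ite_mul,
      Finset.sum_ite_eq']
  have hcj0 : c j₀ ≠ 0 := by
    intro h
    rw [hcj, ZMod.intCast_zmod_eq_zero_iff_dvd] at h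
    have hdN : m * p ∣ N := by
      have := Int.natAbs_dvd_natAbs.mpr h
      rwa [Int.natAbs_natCast, ← hN] at this
    have h1 : m * p ≤ N := Nat.le_of_dvd hNpos hdN
    have h2 : p ≤ m * p := Nat.le_mul_of_pos_left p hm
    omega
  have hcne : c ≠ 0 := fun h => hcj0 (by rw [h]; rfl)
  have hmem : c ∈ code G (m * p) := ⟨Pi.single i₀ 1, rfl⟩
  have hle : minWt G (m * p) ≤ (hammingNorm c : ℕ∞) := by
    unfold minWt
    refine iInf_le_of_le c ?_
    refine iInf_le_of_le hmem ?_
    exact iInf_le_of_le hcne le_rfl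
  rw [hq] at hle
  exact absurd (top_le_iff.mp hle).symm (by simp)

end ArrCode
end

section
/- For every subset J ⊆ E and every q ∈ ℤ_{>0}, the cardinality of H_J(q) equals (Π_{ℓ=1}^{r(J)} gcd(q, e_{ℓ,J})) · q^{k − r(J)}. -/
open scoped BigOperators

namespace ArrCode

variable {k n : ℕ}

set_option linter.unusedSectionVars false
set_option maxHeartbeats 1000000



/-- gcd of products of size-`j` sub-multisets. -/
def msD (j : ℕ) (s : Multiset ℕ) : ℕ :=
  ((s.powersetCard j).map Multiset.prod).gcd

lemma gcd_eq_natgcd (a b : ℕ) : GCDMonoid.gcd a b = Nat.gcd a b := rfl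

lemma msD_zero (s : Multiset ℕ) : msD 0 s = 1 := by
  simp [msD, Multiset.powersetCard_zero_left]

lemma msD_big {j : ℕ} {s : Multiset ℕ} (h : Multiset.card s < j) : msD j s = 0 := by
  have : s.powersetCard j = 0 := by
    rw [Multiset.powersetCard_eq_empty]
    omega
  simp [msD, this]

lemma gcd_map_mul (x : ℕ) (s : Multiset ℕ) :
    (s.map (fun t => x * t)).gcd = x * s.gcd := by
  induction s using Multiset.induction with
  | empty => simp
  | cons a s ih => simp [ih, gcd_eq_natgcd, Nat.gcd_mul_left]

lemma msD_cons (j : ℕ) (x : ℕ) (s : Multiset ℕ) :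
    msD (j + 1) (x ::ₘ s) = Nat.gcd (msD (j + 1) s) (x * msD j s) := by
  unfold msD
  rw [Multiset.powersetCard_cons, Multiset.map_add, Multiset.gcd_add]
  congr 1
  rw [Multiset.map_map]
  have h1 : ((Multiset.prod ∘ Multiset.cons x) : Multiset ℕ → ℕ)
      = (fun t => x * t) ∘ Multiset.prod := by
    funext t; simp
  rw [h1, ← Multiset.map_map (fun t => x * t) Multiset.prod, gcd_map_mul]

private lemma gcd_helper (x y A B C : ℕ) :
    Nat.gcd (Nat.gcd A (y * B)) (x * Nat.gcd B (y * C)) =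
      Nat.gcd A (Nat.gcd (Nat.gcd x y * B) (x * y * C)) := by
  rw [← Nat.gcd_mul_left x B (y * C), ← mul_assoc x y C]
  rw [Nat.gcd_assoc A (y*B) _]
  congr 1
  rw [← Nat.gcd_assoc (y*B) (x*B) (x*y*C)]
  congr 1
  rw [mul_comm y B, mul_comm x B, Nat.gcd_mul_left, mul_comm B _, Nat.gcd_comm y x]

lemma msD_pair_swap (j x y : ℕ) (s : Multiset ℕ) :
    msD j (x ::ₘ y ::ₘ s) = msD j (Nat.gcd x y ::ₘ Nat.lcm x y ::ₘ s) := by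
  have hdl : Nat.gcd x y ∣ Nat.lcm x y := (Nat.gcd_dvd_left x y).trans (Nat.dvd_lcm_left x y)
  have hg : Nat.gcd (Nat.gcd x y) (Nat.lcm x y) = Nat.gcd x y := Nat.gcd_eq_left hdl
  have hm : Nat.gcd x y * Nat.lcm x y = x * y := Nat.gcd_mul_lcm x y
  match j with
  | 0 => simp [msD_zero]
  | 1 =>
      rw [show (1 : ℕ) = 0 + 1 from rfl]
      rw [msD_cons, msD_cons, msD_cons, msD_cons]
      simp only [msD_zero, mul_one]
      rw [Nat.gcd_assoc, Nat.gcd_assoc]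
      congr 1
      rw [Nat.gcd_comm y x, Nat.gcd_eq_right hdl]
  | (j + 2) =>
      rw [show j + 2 = (j+1)+1 from rfl]
      rw [msD_cons, msD_cons, msD_cons, msD_cons, msD_cons, msD_cons]
      rw [gcd_helper, gcd_helper, hg, hm]

lemma msD_one (s : Multiset ℕ) : msD 1 s = s.gcd := by
  induction s using Multiset.induction with
  | empty => simpa using msD_big (j := 1) (s := 0) (by simp)
  | cons a s ih =>
      rw [show (1:ℕ) = 0 + 1 from rfl, msD_cons, msD_zero, mul_one, Multiset.gcd_cons, ih,
        gcd_eq_natgcd, Nat.gcd_comm]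

/-- invariance of `∏ gcd q` under gcd/lcm swap -/
lemma gcd_prod_swap {q x y : ℕ} (hq : 0 < q) (hx : 0 < x) (hy : 0 < y) :
    Nat.gcd q x * Nat.gcd q y = Nat.gcd q (Nat.gcd x y) * Nat.gcd q (Nat.lcm x y) := by
  have h1 : Nat.gcd q x ≠ 0 := Nat.gcd_ne_zero_left hq.ne'
  have h2 : Nat.gcd q y ≠ 0 := Nat.gcd_ne_zero_left hq.ne'
  have h3 : Nat.gcd q (Nat.gcd x y) ≠ 0 := Nat.gcd_ne_zero_left hq.ne'
  have h4 : Nat.gcd q (Nat.lcm x y) ≠ 0 := Nat.gcd_ne_zero_left hq.ne'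
  have hxy : Nat.gcd x y ≠ 0 := Nat.gcd_ne_zero_left hx.ne'
  have hl : Nat.lcm x y ≠ 0 := Nat.lcm_ne_zero hx.ne' hy.ne'
  apply Nat.factorization_inj (by simp [Nat.mul_ne_zero, h1, h2]) (by simp [Nat.mul_ne_zero, h3, h4])
  rw [Nat.factorization_mul h1 h2, Nat.factorization_mul h3 h4,
    Nat.factorization_gcd hq.ne' hx.ne', Nat.factorization_gcd hq.ne' hy.ne',
    Nat.factorization_gcd hq.ne' hxy, Nat.factorization_gcd hq.ne' hl,
    Nat.factorization_gcd hx.ne' hy.ne', Nat.factorization_lcm hx.ne' hy.ne']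
  ext p
  simp only [Finsupp.add_apply, Finsupp.inf_apply, Finsupp.sup_apply]
  omega



lemma gcd_prod_swap' (q : ℕ) {x y : ℕ} (hx : 0 < x) (hy : 0 < y) :
    Nat.gcd q x * Nat.gcd q y = Nat.gcd q (Nat.gcd x y) * Nat.gcd q (Nat.lcm x y) := by
  by_cases hq : q = 0
  · subst hq; simp only [Nat.gcd_zero_left]; exact (Nat.gcd_mul_lcm x y).symm
  · exact gcd_prod_swap (Nat.pos_of_ne_zero hq) hx hy

lemma msD_cons_congr {s t : Multiset ℕ} (h : ∀ j, msD j s = msD j t) (x : ℕ) :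
    ∀ j, msD j (x ::ₘ s) = msD j (x ::ₘ t) := by
  intro j
  match j with
  | 0 => simp [msD_zero]
  | (j+1) => rw [msD_cons, msD_cons, h, h]

lemma extract :
    ∀ s : Multiset ℕ, (∀ x ∈ s, 0 < x) → s ≠ 0 →
      ∃ g t, (∀ j, msD j (g ::ₘ t) = msD j s) ∧ (∀ x ∈ t, 0 < x) ∧ 0 < g ∧
        (∀ x ∈ t, g ∣ x) ∧ Multiset.card (g ::ₘ t) = Multiset.card s ∧
        ∀ q, ((g ::ₘ t).map (Nat.gcd q)).prod = (s.map (Nat.gcd q)).prod := by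
  intro s
  induction s using Multiset.induction with
  | empty => intro _ h; exact absurd rfl h
  | cons x s ih =>
      intro hpos _
      have hx : 0 < x := hpos x (Multiset.mem_cons_self x s)
      have hspos : ∀ y ∈ s, 0 < y := fun y hy => hpos y (Multiset.mem_cons_of_mem hy)
      by_cases hs : s = 0
      · subst hs
        exact ⟨x, 0, fun j => rfl, by simp, hx, by simp, rfl, fun q => rfl⟩
      · obtain ⟨g', t', hD, htpos, hg'pos, hdvd, hcard, hprod⟩ := ih hspos hs
        have hg'x : 0 < Nat.gcd x g' := Nat.gcd_pos_of_pos_left g' hx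
        have hlpos : 0 < Nat.lcm x g' :=
          Nat.pos_of_ne_zero (Nat.lcm_ne_zero hx.ne' hg'pos.ne')
        refine ⟨Nat.gcd x g', Nat.lcm x g' ::ₘ t', ?_, ?_, hg'x, ?_, ?_, ?_⟩
        · intro j
          rw [← msD_pair_swap]
          exact msD_cons_congr hD x j
        · intro y hy
          rcases Multiset.mem_cons.1 hy with h | h
          · exact h ▸ hlpos
          · exact htpos y h
        · intro y hy
          rcases Multiset.mem_cons.1 hy with h | h
          · exact h ▸ ((Nat.gcd_dvd_left x g').trans (Nat.dvd_lcm_left x g'))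
          · exact (Nat.gcd_dvd_right x g').trans (hdvd y h)
        · simp only [Multiset.card_cons] at hcard ⊢; omega
        · intro q
          have hs' : ((g' ::ₘ t').map (Nat.gcd q)).prod = (s.map (Nat.gcd q)).prod := hprod q
          simp only [Multiset.map_cons, Multiset.prod_cons] at hs' ⊢
          rw [← mul_assoc, ← gcd_prod_swap' q hx hg'pos, mul_assoc, hs']

lemma chainify_aux : ∀ (N : ℕ) (s : Multiset ℕ), Multiset.card s ≤ N → (∀ x ∈ s, 0 < x) →
    ∃ l : List ℕ, List.Pairwise (· ∣ ·) l ∧ (∀ x ∈ l, 0 < x) ∧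
      l.length = Multiset.card s ∧ (∀ j, msD j (↑l) = msD j s) ∧
      (∀ q, ((l : Multiset ℕ).map (Nat.gcd q)).prod = (s.map (Nat.gcd q)).prod) := by
  intro N
  induction N with
  | zero =>
      intro s hcard _
      have : s = 0 := by
        rw [← Multiset.card_eq_zero]; omega
      subst this
      exact ⟨[], List.Pairwise.nil, by simp, by simp, fun j => rfl, fun q => rfl⟩
  | succ N ih =>
      intro s hcard hpos
      by_cases hs : s = 0
      · subst hs
        exact ⟨[], List.Pairwise.nil, by simp, by simp, fun j => rfl, fun q => rfl⟩
      · obtain ⟨g, t, hD, htpos, hgpos, hdvd, hcards, hprod⟩ := extract s hpos hs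
        have hct : Multiset.card t ≤ N := by
          simp only [Multiset.card_cons] at hcards; omega
        obtain ⟨l', hpair', hpos', hlen', hD', hprod'⟩ := ih t hct htpos
        refine ⟨g :: l', ?_, ?_, ?_, ?_, ?_⟩
        · rw [List.pairwise_cons]
          refine ⟨fun y hy => ?_, hpair'⟩
          have h1 : g ∣ t.gcd := Multiset.dvd_gcd.2 hdvd
          have h2 : t.gcd = (↑l' : Multiset ℕ).gcd := by
            rw [← msD_one, ← msD_one, hD' 1]
          exact (h1.trans (h2 ▸ Multiset.gcd_dvd (by exact_mod_cast hy)))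
        · intro y hy
          rcases List.mem_cons.1 hy with h | h
          · exact h ▸ hgpos
          · exact hpos' y h
        · simp only [List.length_cons, hlen']
          simp only [Multiset.card_cons] at hcards; omega
        · intro j
          have : ((g :: l' : List ℕ) : Multiset ℕ) = g ::ₘ (↑l' : Multiset ℕ) := rfl
          rw [this]
          exact (msD_cons_congr hD' g j).trans (hD j)
        · intro q
          have : ((g :: l' : List ℕ) : Multiset ℕ) = g ::ₘ (↑l' : Multiset ℕ) := rfl
          rw [this]
          simp only [Multiset.map_cons, Multiset.prod_cons, hprod' q]
          have := hprod q
          simp only [Multiset.map_cons, Multiset.prod_cons] at this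
          exact this


lemma chain_msD : ∀ (l : List ℕ), List.Pairwise (· ∣ ·) l → (∀ x ∈ l, 0 < x) →
    ∀ j, j ≤ l.length → msD j (↑l) = (l.take j).prod := by
  intro l
  induction l with
  | nil =>
      intro _ _ j hj
      have hj0 : j = 0 := Nat.le_zero.1 hj
      subst hj0
      simp [msD_zero]
  | cons x l ih =>
      intro hpair hpos j hj
      have hpair' : List.Pairwise (· ∣ ·) l := (List.pairwise_cons.1 hpair).2
      have hxdvd : ∀ y ∈ l, x ∣ y := (List.pairwise_cons.1 hpair).1
      have hpos' : ∀ y ∈ l, 0 < y := fun y hy => hpos y (List.mem_cons_of_mem x hy)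
      match j with
      | 0 => simp [msD_zero]
      | (j+1) =>
          have hcons : ((x :: l : List ℕ) : Multiset ℕ) = x ::ₘ (↑l : Multiset ℕ) := rfl
          rw [hcons, msD_cons, ih hpair' hpos' j (by simpa using Nat.lt_succ_iff.1 hj)]
          rcases Nat.lt_or_ge j l.length with hlt | hge
          · rw [ih hpair' hpos' (j+1) hlt]
            have hdvd : x * (l.take j).prod ∣ (l.take (j+1)).prod := by
              rw [List.prod_take_succ l j hlt, mul_comm x _]
              exact mul_dvd_mul_left _ (hxdvd _ (List.getElem_mem hlt))
            rw [Nat.gcd_eq_right hdvd]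
            simp [List.take_cons, List.prod_cons]
          · have hj' : j = l.length := by
              simp only [List.length_cons] at hj; omega
            subst hj'
            have h0 : msD (l.length + 1) (↑l : Multiset ℕ) = 0 := by
              apply msD_big; simp
            rw [h0, Nat.gcd_zero_left]
            have : (x :: l).take (l.length + 1) = x :: l.take l.length := rfl
            rw [this, List.prod_cons]

lemma NT_key (l : List ℕ) (hpair : List.Pairwise (· ∣ ·) l) (hpos : ∀ x ∈ l, 0 < x) (q : ℕ) :
    ∏ j ∈ Finset.Icc 1 l.length, Nat.gcd q (msD j (↑l) / msD (j-1) (↑l)) =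
      ∏ i : Fin l.length, Nat.gcd q l[(i : ℕ)] := by
  have step1 : ∏ j ∈ Finset.Icc 1 l.length, Nat.gcd q (msD j (↑l) / msD (j-1) (↑l))
      = ∏ i ∈ Finset.range l.length, Nat.gcd q (msD (1+i) (↑l) / msD (1+i-1) (↑l)) := by
    rw [← Finset.Ico_add_one_right_eq_Icc, Finset.prod_Ico_eq_prod_range]
    simp
  rw [step1, ← Fin.prod_univ_eq_prod_range]
  apply Finset.prod_congr rfl
  intro i _
  congr 1
  have hi : (i : ℕ) < l.length := i.2
  have h1 : (1 : ℕ) + i - 1 = i := by omega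
  have h2 : (1 : ℕ) + i = i + 1 := by omega
  rw [h1, h2, chain_msD l hpair hpos (i+1) hi, chain_msD l hpair hpos i (le_of_lt hi),
    List.prod_take_succ l i hi]
  have hp : 0 < (l.take (i : ℕ)).prod := by
    apply List.prod_pos
    intro y hy
    exact hpos y ((List.take_sublist _ _).subset hy)
  exact Nat.mul_div_cancel_left _ hp

lemma NT {r : ℕ} (v : Fin r → ℕ) (hv : ∀ i, 0 < v i) (q : ℕ) :
    ∏ j ∈ Finset.Icc 1 r, Nat.gcd q
        (msD j (Multiset.map v Finset.univ.val) / msD (j-1) (Multiset.map v Finset.univ.val)) =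
      ∏ i, Nat.gcd q (v i) := by
  set S := Multiset.map v Finset.univ.val with hS
  have hScard : Multiset.card S = r := by simp [hS]
  have hSpos : ∀ x ∈ S, 0 < x := by
    intro x hx
    rw [hS, Multiset.mem_map] at hx
    obtain ⟨i, _, rfl⟩ := hx
    exact hv i
  obtain ⟨l, hpair, hpos, hlen, hD, hprod⟩ := chainify_aux (Multiset.card S) S le_rfl hSpos
  rw [hScard] at hlen
  subst hlen
  have key := NT_key l hpair hpos q
  calc ∏ j ∈ Finset.Icc 1 l.length, Nat.gcd q (msD j S / msD (j-1) S)
      = ∏ j ∈ Finset.Icc 1 l.length, Nat.gcd q (msD j (↑l) / msD (j-1) (↑l)) := by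
        apply Finset.prod_congr rfl; intro j _; rw [hD j, hD (j-1)]
    _ = ∏ i : Fin l.length, Nat.gcd q l[(i : ℕ)] := key
    _ = ∏ i, Nat.gcd q (v i) := by
        have h2 := hprod q
        have h3 : ((l : Multiset ℕ).map (Nat.gcd q)).prod
            = ∏ i : Fin l.length, Nat.gcd q l[(i:ℕ)] := by
          rw [Multiset.map_coe, Multiset.prod_coe]
          conv_lhs => rw [show l = List.ofFn (fun i : Fin l.length => l[(i:ℕ)]) from
            (List.ofFn_getElem (xs := l)).symm]
          rw [List.map_ofFn, List.prod_ofFn]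
          rfl
        have h4 : (S.map (Nat.gcd q)).prod = ∏ i, Nat.gcd q (v i) := by
          rw [hS, Multiset.map_map]
          rfl
        rw [← h3, h2, h4]

variable {α β γ : Type*} [Fintype α] [Fintype β] [Fintype γ]
  [DecidableEq α] [DecidableEq β] [DecidableEq γ]

/-- gcd of (absolute values of) all j×j minors, over all (not nec. injective) index maps. -/
def dd (j : ℕ) (M : Matrix α β ℤ) : ℕ :=
  Finset.gcd Finset.univ fun p : (Fin j → α) × (Fin j → β) =>
    ((M.submatrix p.1 p.2).det).natAbs

lemma dd_dvd_det (j : ℕ) (M : Matrix α β ℤ) (f : Fin j → α) (g : Fin j → β) :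
    dd j M ∣ ((M.submatrix f g).det).natAbs :=
  Finset.gcd_dvd (Finset.mem_univ ((f, g) : (Fin j → α) × (Fin j → β)))

lemma dd_dvd_det_int (j : ℕ) (M : Matrix α β ℤ) (f : Fin j → α) (g : Fin j → β) :
    (dd j M : ℤ) ∣ (M.submatrix f g).det :=
  Int.dvd_natAbs.1 (Int.natCast_dvd_natCast.2 (dd_dvd_det j M f g))

lemma dd_transpose (j : ℕ) (M : Matrix α β ℤ) : dd j M.transpose = dd j M := by
  apply Nat.dvd_antisymm
  · apply Finset.dvd_gcd
    rintro ⟨f, g⟩ -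
    have : M.submatrix f g = (M.transpose.submatrix g f).transpose := by
      ext l s; rfl
    rw [this, Matrix.det_transpose]
    exact dd_dvd_det j M.transpose g f
  · apply Finset.dvd_gcd
    rintro ⟨f, g⟩ -
    have : M.transpose.submatrix f g = (M.submatrix g f).transpose := by
      ext l s; rfl
    rw [this, Matrix.det_transpose]
    exact dd_dvd_det j M g f

lemma dd_dvd_mul_right (j : ℕ) (M : Matrix α γ ℤ) (N : Matrix γ β ℤ) :
    dd j N ∣ dd j (M * N) := by
  apply Finset.dvd_gcd
  rintro ⟨f, g⟩ -
  dsimp only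
  suffices h : (dd j N : ℤ) ∣ ((M * N).submatrix f g).det by
    simpa using Int.natAbs_dvd_natAbs.2 h
  have e1 : ((M * N).submatrix f g) =
      Matrix.of (fun l => ∑ t : γ, M (f l) t • (fun s : Fin j => N t (g s))) := by
    ext l s
    simp [Matrix.mul_apply, Finset.sum_apply]
  rw [e1]
  have e2 := (Matrix.detRowAlternating (R := ℤ) (n := Fin j)).toMultilinearMap.map_sum
    (g := fun l (t : γ) => M (f l) t • (fun s : Fin j => N t (g s)))
  have e3 : (Matrix.of (fun l => ∑ t : γ, M (f l) t • (fun s : Fin j => N t (g s)))).det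
      = ∑ r : Fin j → γ, Matrix.detRowAlternating
          (fun l => M (f l) (r l) • (fun s : Fin j => N (r l) (g s))) := e2
  rw [e3]
  apply Finset.dvd_sum
  intro r _
  have e4 : Matrix.detRowAlternating (fun l => M (f l) (r l) • (fun s : Fin j => N (r l) (g s)))
      = (∏ l, M (f l) (r l)) • (N.submatrix r g).det :=
    (Matrix.detRowAlternating (R := ℤ) (n := Fin j)).toMultilinearMap.map_smul_univ
      (fun l => M (f l) (r l)) (fun l s => N (r l) (g s))
  rw [e4, smul_eq_mul]
  exact Dvd.dvd.mul_left (dd_dvd_det_int j N r g) _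

lemma dd_dvd_mul_left (j : ℕ) (M : Matrix α γ ℤ) (N : Matrix γ β ℤ) :
    dd j M ∣ dd j (M * N) := by
  rw [← dd_transpose j M, ← dd_transpose j (M * N), Matrix.transpose_mul]
  exact dd_dvd_mul_right j N.transpose M.transpose


lemma card_mulker (q : ℕ) (hq : 0 < q) (c : ℤ) :
    Nat.card {x : ZMod q // (c : ZMod q) * x = 0} = Nat.gcd q c.natAbs := by
  haveI : NeZero q := ⟨hq.ne'⟩
  set c' : ZMod q := (c : ZMod q) with hc'
  set ψ : ZMod q →+ ZMod q := AddMonoidHom.mulLeft c' with hψ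
  have hker : ∀ x : ZMod q, x ∈ ψ.ker ↔ c' * x = 0 := by
    intro x; rw [AddMonoidHom.mem_ker]; rfl
  have hcardker : Nat.card {x : ZMod q // c' * x = 0} = Nat.card ψ.ker := by
    apply Nat.card_congr
    exact Equiv.subtypeEquivRight fun x => (hker x).symm
  -- range = zmultiples c'
  have hrange : ψ.range = AddSubgroup.zmultiples c' := by
    ext x
    constructor
    · rintro ⟨y, rfl⟩
      refine AddSubgroup.mem_zmultiples_iff.2 ⟨(y.val : ℤ), ?_⟩
      rw [zsmul_eq_mul, Int.cast_natCast, ZMod.natCast_val, ZMod.cast_id, mul_comm]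
      rfl
    · intro hx
      obtain ⟨n, rfl⟩ := AddSubgroup.mem_zmultiples_iff.1 hx
      exact ⟨(n : ZMod q), by rw [zsmul_eq_mul, mul_comm]; rfl⟩
  have horder : addOrderOf c' = q / Nat.gcd q c.natAbs := by
    rcases Int.natAbs_eq c with h | h
    · rw [show c' = ((c.natAbs : ℕ) : ZMod q) by rw [hc']; conv_lhs => rw [h, Int.cast_natCast]]
      exact ZMod.addOrderOf_coe c.natAbs hq.ne'
    · rw [show c' = -((c.natAbs : ℕ) : ZMod q) by
        rw [hc']; conv_lhs => rw [h, Int.cast_neg, Int.cast_natCast]]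
      rw [addOrderOf_neg]
      exact ZMod.addOrderOf_coe c.natAbs hq.ne'
  have hq' : Nat.card (ZMod q) = Nat.card (ZMod q ⧸ ψ.ker) * Nat.card ψ.ker :=
    AddSubgroup.card_eq_card_quotient_mul_card_addSubgroup ψ.ker
  have hquot : Nat.card (ZMod q ⧸ ψ.ker) = q / Nat.gcd q c.natAbs := by
    rw [Nat.card_congr (QuotientAddGroup.quotientKerEquivRange ψ).toEquiv, hrange,
      Nat.card_zmultiples, horder]
  have hzq : Nat.card (ZMod q) = q := by simp [Nat.card_eq_fintype_card, ZMod.card]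
  rw [hzq, hquot] at hq'
  have hgdvd : Nat.gcd q c.natAbs ∣ q := Nat.gcd_dvd_left _ _
  have hgpos : 0 < Nat.gcd q c.natAbs := Nat.gcd_pos_of_pos_left _ hq
  have hdiv : 0 < q / Nat.gcd q c.natAbs := Nat.div_pos (Nat.le_of_dvd hq hgdvd) hgpos
  rw [hcardker]
  have hmc : q / Nat.gcd q c.natAbs * Nat.gcd q c.natAbs = q := Nat.div_mul_cancel hgdvd
  exact Nat.eq_of_mul_eq_mul_left hdiv (hq'.symm.trans hmc.symm)


section Counting
variable {k m : ℕ}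

lemma card_solset (q : ℕ) (hq : 0 < q) (f : Fin m ↪ Fin k) (a : Fin m → ℤ) :
    Nat.card {v : Fin k → ZMod q // ∀ i : Fin m, ((a i : ℤ) : ZMod q) * v (f i) = 0}
      = (∏ i, Nat.gcd q (a i).natAbs) * q ^ (k - m) := by
  classical
  haveI : NeZero q := ⟨hq.ne'⟩
  have e1 : {v : Fin k → ZMod q // ∀ i : Fin m, ((a i : ℤ) : ZMod q) * v (f i) = 0}
      ≃ {v : Fin k → ZMod q // ∀ t, ∀ i, f i = t → ((a i : ℤ) : ZMod q) * v t = 0} := by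
    apply Equiv.subtypeEquivRight
    intro v
    constructor
    · intro h t i hit; subst hit; exact h i
    · intro h i; exact h (f i) i rfl
  have e2 : {v : Fin k → ZMod q // ∀ t, ∀ i, f i = t → ((a i : ℤ) : ZMod q) * v t = 0}
      ≃ ∀ t : Fin k, {x : ZMod q // ∀ i, f i = t → ((a i : ℤ) : ZMod q) * x = 0} :=
    Equiv.subtypePiEquivPi (p := fun t x => ∀ i : Fin m, f i = t → ((a i : ℤ) : ZMod q) * x = 0)
  rw [Nat.card_congr (e1.trans e2), Nat.card_pi]
  rw [← Finset.prod_mul_prod_compl (Finset.univ.image f)]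
  congr 1
  · rw [Finset.prod_image (by intro x _ y _ h; exact f.injective h)]
    apply Finset.prod_congr rfl
    intro i₀ _
    have : {x : ZMod q // ∀ i, f i = f i₀ → ((a i : ℤ) : ZMod q) * x = 0}
        ≃ {x : ZMod q // ((a i₀ : ℤ) : ZMod q) * x = 0} := by
      apply Equiv.subtypeEquivRight
      intro x
      constructor
      · intro h; exact h i₀ rfl
      · intro h i hi; rwa [f.injective hi]
    rw [Nat.card_congr this, card_mulker q hq (a i₀)]
  · have hall : ∀ t ∈ (Finset.univ.image f)ᶜ,
        Nat.card {x : ZMod q // ∀ i, f i = t → ((a i : ℤ) : ZMod q) * x = 0} = q := by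
      intro t ht
      rw [Finset.mem_compl] at ht
      have : ∀ x : ZMod q, ∀ i, f i = t → ((a i : ℤ) : ZMod q) * x = 0 := by
        intro x i hi
        exact absurd (Finset.mem_image.2 ⟨i, Finset.mem_univ i, hi⟩) ht
      rw [Nat.card_congr (Equiv.subtypeUnivEquiv this)]
      simp [Nat.card_eq_fintype_card, ZMod.card]
    rw [Finset.prod_congr rfl hall, Finset.prod_const, Finset.card_compl,
      Finset.card_image_of_injective _ f.injective]
    simp
end Counting

section DD
variable {α β α' β' : Type*} [Fintype α] [Fintype β] [Fintype α'] [Fintype β']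
  [DecidableEq α] [DecidableEq β] [DecidableEq α'] [DecidableEq β']

lemma dd_eq_of_factor (A : Matrix α β ℤ) (D : Matrix α' β' ℤ)
    (P : Matrix α α' ℤ) (Q : Matrix β' β ℤ) (P' : Matrix α' α ℤ) (Q' : Matrix β β' ℤ)
    (hA : A = P * D * Q) (hD : D = P' * A * Q') (j : ℕ) : dd j A = dd j D := by
  apply Nat.dvd_antisymm
  · have h1 : dd j A ∣ dd j (P' * A) := dd_dvd_mul_right j P' A
    have h2 : dd j (P' * A) ∣ dd j (P' * A * Q') := dd_dvd_mul_left j (P' * A) Q'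
    rw [hD]; exact h1.trans h2
  · have h1 : dd j D ∣ dd j (P * D) := dd_dvd_mul_right j P D
    have h2 : dd j (P * D) ∣ dd j (P * D * Q) := dd_dvd_mul_left j (P * D) Q
    rw [hA]; exact h1.trans h2

end DD

section Diag
variable {k m : ℕ}

lemma dd_diagonal_like (f : Fin m ↪ Fin k) (a : Fin m → ℤ) (j : ℕ) :
    dd j (Matrix.of fun (s : Fin k) (i : Fin m) => if s = f i then a i else 0)
      = msD j (Multiset.map (fun i => (a i).natAbs) Finset.univ.val) := by
  classical
  set D : Matrix (Fin k) (Fin m) ℤ :=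
    Matrix.of fun (s : Fin k) (i : Fin m) => if s = f i then a i else 0 with hDdef
  set w : Fin m → ℕ := fun i => (a i).natAbs with hw
  set S : Multiset ℕ := Multiset.map w Finset.univ.val with hSdef
  apply Nat.dvd_antisymm
  · -- dd ∣ msD : every subset product is (up to sign) a minor
    apply Multiset.dvd_gcd.2
    intro b hb
    rw [Multiset.mem_map] at hb
    obtain ⟨t, ht, rfl⟩ := hb
    rw [hSdef, Multiset.powersetCard_map, Multiset.mem_map] at ht
    obtain ⟨u, hu, rfl⟩ := ht
    rw [Multiset.mem_powersetCard] at hu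
    obtain ⟨hle, hcard⟩ := hu
    have hnodup : u.Nodup := Multiset.nodup_of_le hle Finset.univ.nodup
    set Su : Finset (Fin m) := ⟨u, hnodup⟩ with hSu
    have hcardS : Su.card = j := hcard
    set h : Fin j → Fin m := fun l => ((Su.orderIsoOfFin hcardS) l : Fin m) with hh
    have hinj : Function.Injective h :=
      Subtype.coe_injective.comp (Su.orderIsoOfFin hcardS).injective
    have hdiag : D.submatrix (f ∘ h) h = Matrix.diagonal (fun l => a (h l)) := by
      ext l s
      by_cases hls : l = s
      · subst hls; simp [hDdef, Matrix.submatrix_apply]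
      · have hne : f (h l) ≠ f (h s) := fun hEq => hls (hinj (f.injective hEq))
        simp [hDdef, Matrix.submatrix_apply, Matrix.diagonal_apply_ne _ hls, hne]
    have h1 : dd j D ∣ ((D.submatrix (f ∘ h) h).det).natAbs := dd_dvd_det j D (f ∘ h) h
    rw [hdiag, Matrix.det_diagonal] at h1
    have h2 : ((∏ l, a (h l)).natAbs) = ∏ l, w (h l) := by
      exact map_prod Int.natAbsHom (fun l => a (h l)) Finset.univ
    rw [h2] at h1
    have h3 : (Multiset.map w u).prod = ∏ l, w (h l) := by
      have e0 : (Multiset.map w u).prod = ∏ x ∈ Su, w x :=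
        (Finset.prod_eq_multiset_prod Su w).symm
      rw [e0, ← Finset.prod_coe_sort Su w,
        ← Equiv.prod_comp (Su.orderIsoOfFin hcardS).toEquiv (fun x : Su => w (x : Fin m))]
      rfl
    rw [h3]
    exact h1
  · -- msD ∣ dd
    apply Finset.dvd_gcd
    rintro ⟨g, h⟩ -
    dsimp only
    by_cases hinj : Function.Injective h
    · have hcol : D.submatrix g h =
          Matrix.of (fun l s => a (h s) * (if g l = f (h s) then (1:ℤ) else 0)) := by
        ext l s
        by_cases hc : g l = f (h s) <;> simp [hDdef, Matrix.submatrix_apply, hc]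
      have hdm := Matrix.det_mul_row (fun s => a (h s)) (Matrix.of fun l s => if g l = f (h s) then (1:ℤ) else 0)
      simp only [Matrix.of_apply] at hdm
      rw [hcol, hdm, Int.natAbs_mul]
      have h2 : ((∏ s, a (h s)).natAbs) = ∏ s, w (h s) := by
        exact map_prod Int.natAbsHom (fun s => a (h s)) Finset.univ
      rw [h2]
      apply Dvd.dvd.mul_right
      -- msD j S ∣ ∏ s, w (h s)
      have hmem : Multiset.map w (Multiset.map h Finset.univ.val) ∈ S.powersetCard j := by
        rw [Multiset.mem_powersetCard]
        constructor
        · rw [hSdef]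
          apply Multiset.map_le_map
          rw [Multiset.le_iff_subset ((Finset.univ.nodup).map hinj)]
          intro x _
          exact Finset.mem_univ x
        · simp
      have hdvd : msD j S ∣ (Multiset.map w (Multiset.map h Finset.univ.val)).prod :=
        Multiset.gcd_dvd (Multiset.mem_map_of_mem Multiset.prod hmem)
      have heq : (Multiset.map w (Multiset.map h Finset.univ.val)).prod = ∏ s, w (h s) := by
        rw [Multiset.map_map]
        exact (Finset.prod_eq_multiset_prod Finset.univ (w ∘ h)).symm
      rwa [heq] at hdvd
    · rw [Function.not_injective_iff] at hinj
      obtain ⟨s, s', hss', hne⟩ := hinj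
      have : (D.submatrix g h).det = 0 := by
        apply Matrix.det_zero_of_column_eq hne
        intro l
        simp [Matrix.submatrix_apply, hss']
      rw [this]
      simp

lemma rank_diag (f : Fin m ↪ Fin k) (a : Fin m → ℤ) (ha : ∀ i, a i ≠ 0) :
    (Matrix.of fun (s : Fin k) (i : Fin m) => if s = f i then (a i : ℚ) else 0).rank = m := by
  classical
  set D : Matrix (Fin k) (Fin m) ℚ :=
    Matrix.of fun (s : Fin k) (i : Fin m) => if s = f i then (a i : ℚ) else 0 with hDdef
  rw [Matrix.rank_eq_finrank_span_cols]
  have hli : LinearIndependent ℚ (fun i : Fin m => D.transpose i) := by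
    rw [Fintype.linearIndependent_iff]
    intro c hc i₀
    have this : ∑ i, c i • D.transpose i (f i₀) = 0 := by
      simpa using congrFun hc (f i₀)
    have hsum : ∑ i, c i • D.transpose i (f i₀) = c i₀ * (a i₀ : ℚ) := by
      rw [Finset.sum_eq_single i₀]
      · simp [hDdef, Matrix.transpose_apply]
      · intro i _ hi
        have hne : f i₀ ≠ f i := fun hEq => hi (f.injective hEq).symm
        simp [hDdef, Matrix.transpose_apply, hne]
      · intro hi; exact absurd (Finset.mem_univ i₀) hi
    rw [hsum] at this
    rcases mul_eq_zero.1 this with h | h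
    · exact h
    · exact absurd h (by exact_mod_cast ha i₀)
  rw [show Set.range D.col = Set.range (fun i => D.transpose i) from rfl, finrank_span_eq_card hli, Fintype.card_fin]

end Diag

theorem stmt3 (k n : ℕ) (hk : 1 ≤ k) (hn : 1 ≤ n) (G : Matrix (Fin k) (Fin n) ℤ)
    (hG : ∀ j : Fin n, ∃ i : Fin k, G i j ≠ 0)
    (J : Finset (Fin n)) (q : ℕ) (hq : 0 < q) :
    (HJ G J q).ncard =
      (∏ ℓ ∈ Finset.Icc 1 (rk G J), Nat.gcd q (elemDiv G J ℓ)) * q ^ (k - rk G J) := by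
  classical
  haveI : NeZero q := ⟨hq.ne'⟩
  set A : Matrix (Fin k) {x // x ∈ J} ℤ := Matrix.of fun i j => G i (j : Fin n) with hA_def
  set L : Submodule ℤ (Fin k → ℤ) := Submodule.span ℤ (Set.range A.transpose) with hL_def
  obtain ⟨m, snf⟩ := Submodule.smithNormalForm (Pi.basisFun ℤ (Fin k)) L
  obtain ⟨bM, bN, f, a, hsnf⟩ := snf
  have ha0 : ∀ i, a i ≠ 0 := by
    intro i hai
    apply Module.Basis.ne_zero bN i
    have h := hsnf i
    rw [hai, zero_smul] at h
    exact (ZeroMemClass.coe_eq_zero).1 h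
  set P : Matrix (Fin k) (Fin k) ℤ := (Pi.basisFun ℤ (Fin k)).toMatrix ⇑bM with hPdef
  haveI hPinv : Invertible P := (Pi.basisFun ℤ (Fin k)).invertibleToMatrix bM
  have hP : ∀ s t, P s t = bM t s := by
    intro s t
    rw [hPdef, Module.Basis.toMatrix_apply, Pi.basisFun_repr]
  set Dm : Matrix (Fin k) (Fin m) ℤ :=
    Matrix.of (fun (s : Fin k) (i : Fin m) => if s = f i then a i else 0) with hDmdef
  have hmem : ∀ j : {x // x ∈ J}, A.transpose j ∈ L :=
    fun j => Submodule.subset_span ⟨j, rfl⟩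
  set β : Matrix (Fin m) {x // x ∈ J} ℤ :=
    Matrix.of (fun i j => bN.repr ⟨A.transpose j, hmem j⟩ i) with hβdef
  have hPD : ∀ (s : Fin k) (i : Fin m), (P * Dm) s i = (bN i : Fin k → ℤ) s := by
    intro s i
    rw [Matrix.mul_apply]
    rw [Finset.sum_eq_single (f i)]
    · rw [hP, (show Dm (f i) i = a i by simp [hDmdef])]
      have h := congrFun (hsnf i) s
      rw [h, Pi.smul_apply, smul_eq_mul, mul_comm]
    · intro t _ ht
      have h0 : Dm t i = 0 := by simp [hDmdef, ht]
      rw [h0, mul_zero]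
    · intro h; exact absurd (Finset.mem_univ (f i)) h
  have hA : A = P * Dm * β := by
    ext s j
    rw [Matrix.mul_apply]
    have hrepr := Module.Basis.sum_repr bN ⟨A.transpose j, hmem j⟩
    have hrepr' := congrFun (congrArg (Subtype.val) hrepr) s
    rw [Submodule.coe_sum] at hrepr'
    simp only [Finset.sum_apply, Submodule.coe_smul, Pi.smul_apply, smul_eq_mul] at hrepr'
    calc A s j = ∑ i, bN.repr ⟨A.transpose j, hmem j⟩ i * (bN i : Fin k → ℤ) s := hrepr'.symm
      _ = ∑ i, (P * Dm) s i * β i j := by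
          apply Finset.sum_congr rfl
          intro i _
          rw [hPD s i, mul_comm]
          rfl
  have hgam : ∀ i : Fin m, ∃ c : {x // x ∈ J} → ℤ,
      ∑ j, c j • A.transpose j = (bN i : Fin k → ℤ) := by
    intro i
    have h2 : (bN i : Fin k → ℤ) ∈ L := (bN i).2
    exact (Submodule.mem_span_range_iff_exists_fun ℤ).1 h2
  choose γc hγc using hgam
  set γ : Matrix {x // x ∈ J} (Fin m) ℤ := Matrix.of (fun j i => γc i j) with hγdef
  have hβγ : β * γ = 1 := by
    ext i i'
    rw [Matrix.mul_apply, Matrix.one_apply]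
    have hsum : (∑ j, γc i' j • (⟨A.transpose j, hmem j⟩ : L)) = bN i' := by
      apply Subtype.ext
      rw [Submodule.coe_sum]
      simp only [SetLike.val_smul]
      exact hγc i'
    calc ∑ j, β i j * γ j i'
        = ∑ j, bN.repr (γc i' j • (⟨A.transpose j, hmem j⟩ : L)) i := by
          apply Finset.sum_congr rfl
          intro j _
          rw [map_smul, Finsupp.smul_apply, smul_eq_mul, mul_comm]
          rfl
      _ = bN.repr (∑ j, γc i' j • (⟨A.transpose j, hmem j⟩ : L)) i := by
          rw [map_sum, Finsupp.finset_sum_apply]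
      _ = bN.repr (bN i') i := by rw [hsum]
      _ = if i = i' then 1 else 0 := by
          rw [Module.Basis.repr_self]
          by_cases h : i = i'
          · subst h; simp
          · simp [Finsupp.single_apply, h, Ne.symm h]
  have hDm2 : Dm = ⅟P * A * γ := by
    rw [hA]
    simp only [← Matrix.mul_assoc]
    rw [invOf_mul_self, Matrix.one_mul, Matrix.mul_assoc, hβγ, Matrix.mul_one]
  have hdd : ∀ j, minorGcd G J j
      = msD j (Multiset.map (fun i => (a i).natAbs) Finset.univ.val) := by
    intro j
    have h1 : minorGcd G J j = dd j A := rfl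
    rw [h1, dd_eq_of_factor A Dm P β (⅟P) γ hA hDm2 j, hDmdef, dd_diagonal_like f a j]
  have hrk : rk G J = m := by
    have h0 : rk G J = (A.map (Int.cast : ℤ → ℚ)).rank := rfl
    have hcast : ((Int.cast : ℤ → ℚ)) = ⇑(Int.castRingHom ℚ) := rfl
    have hAq : A.map (Int.cast : ℤ → ℚ)
        = (P.map (Int.cast : ℤ → ℚ)) * (Dm.map (Int.cast : ℤ → ℚ))
          * (β.map (Int.cast : ℤ → ℚ)) := by
      rw [hA, hcast, Matrix.map_mul, Matrix.map_mul]
    have hDq : Dm.map (Int.cast : ℤ → ℚ)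
        = Matrix.of (fun (s : Fin k) (i : Fin m) => if s = f i then (a i : ℚ) else 0) := by
      ext s i
      simp [hDmdef, Matrix.map_apply, apply_ite (Int.cast : ℤ → ℚ)]
    have hDmq : Dm.map (Int.cast : ℤ → ℚ)
        = ((⅟P).map (Int.cast : ℤ → ℚ)) * (A.map (Int.cast : ℤ → ℚ))
          * (γ.map (Int.cast : ℤ → ℚ)) := by
      rw [hDm2, hcast, Matrix.map_mul, Matrix.map_mul]
    have le1 : (A.map (Int.cast : ℤ → ℚ)).rank ≤ (Dm.map (Int.cast : ℤ → ℚ)).rank := by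
      rw [hAq]
      exact (Matrix.rank_mul_le_left _ _).trans (Matrix.rank_mul_le_right _ _)
    have le2 : (Dm.map (Int.cast : ℤ → ℚ)).rank ≤ (A.map (Int.cast : ℤ → ℚ)).rank := by
      conv_lhs => rw [hDmq]
      exact (Matrix.rank_mul_le_left _ _).trans (Matrix.rank_mul_le_right _ _)
    have heq : (A.map (Int.cast : ℤ → ℚ)).rank = (Dm.map (Int.cast : ℤ → ℚ)).rank :=
      Nat.le_antisymm le1 le2
    rw [h0, heq, hDq, rank_diag f a ha0]
  -- counting
  set ℓmap : (Fin k → ZMod q) → ((Fin k → ℤ) →ₗ[ℤ] ZMod q) :=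
    fun u => (Pi.basisFun ℤ (Fin k)).constr (M' := ZMod q) ℤ u with hℓdef
  set Ψe : (Fin k → ZMod q) ≃ (Fin k → ZMod q) :=
    (((Pi.basisFun ℤ (Fin k)).constr (M' := ZMod q) ℤ).toEquiv.trans
      (bM.constr (M' := ZMod q) ℤ).toEquiv.symm) with hΨdef
  have hΨe : ∀ u t, Ψe u t = ℓmap u (bM t) := by
    intro u t
    have h1 : Ψe u = (bM.constr (M' := ZMod q) ℤ).symm (ℓmap u) := rfl
    have h2 : (bM.constr (M' := ZMod q) ℤ).symm (ℓmap u) = fun i => ℓmap u (bM i) := by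
      rw [LinearEquiv.symm_apply_eq]
      exact (bM.constr_self ℤ (ℓmap u)).symm
    rw [h1, h2]
  have hℓapp : ∀ (u : Fin k → ZMod q) (x : Fin k → ℤ),
      ℓmap u x = ∑ t, ((x t : ℤ) : ZMod q) * u t := by
    intro u x
    rw [hℓdef]
    rw [Module.Basis.constr_apply_fintype, Pi.basisFun_equivFun]
    apply Finset.sum_congr rfl
    intro t _
    simp [zsmul_eq_mul]
  have hchar : ∀ u, u ∈ HJ G J q ↔ ∀ i, ((a i : ℤ) : ZMod q) * Ψe u (f i) = 0 := by
    intro u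
    have hAj : ∀ j : {x // x ∈ J},
        ℓmap u (A.transpose j) = Matrix.vecMul u (Gmod G q) (j : Fin n) := by
      intro j
      rw [hℓapp]
      have hv : Matrix.vecMul u (Gmod G q) (j : Fin n)
          = ∑ t, u t * ((G t (j : Fin n) : ℤ) : ZMod q) := by
        simp [Matrix.vecMul, dotProduct, Gmod, Matrix.map_apply]
      rw [hv]
      apply Finset.sum_congr rfl
      intro t _
      rw [mul_comm]
      rfl
    have hbn : ∀ i, ℓmap u ((bN i : Fin k → ℤ)) = ((a i : ℤ) : ZMod q) * Ψe u (f i) := by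
      intro i
      rw [hsnf i, map_smul, zsmul_eq_mul, hΨe u (f i)]
    constructor
    · intro hu i
      have hle : L ≤ LinearMap.ker (ℓmap u) := by
        rw [hL_def]
        apply Submodule.span_le.2
        rintro x ⟨j, rfl⟩
        rw [SetLike.mem_coe, LinearMap.mem_ker, hAj j]
        exact hu (j : Fin n) j.2
      rw [← hbn i]
      exact LinearMap.mem_ker.1 (hle (bN i).2)
    · intro h j hj
      have hx := Module.Basis.sum_repr bN ⟨A.transpose ⟨j, hj⟩, hmem ⟨j, hj⟩⟩
      have hx' := congrArg (Subtype.val) hx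
      rw [Submodule.coe_sum] at hx'
      rw [← hAj ⟨j, hj⟩]
      have hAx : A.transpose ⟨j, hj⟩
          = ∑ i, bN.repr ⟨A.transpose ⟨j, hj⟩, hmem ⟨j, hj⟩⟩ i • (bN i : Fin k → ℤ) := by
        simp only [SetLike.val_smul] at hx'
        exact hx'.symm
      rw [hAx, map_sum]
      apply Finset.sum_eq_zero
      intro i _
      rw [map_smul, hbn i, h i, smul_zero]
  have hcount : (HJ G J q).ncard = (∏ i, Nat.gcd q (a i).natAbs) * q ^ (k - m) := by
    have h1 : (HJ G J q).ncard = Nat.card (HJ G J q) := rfl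
    rw [h1, Nat.card_congr (Equiv.subtypeEquiv
      (q := fun v => ∀ i, ((a i : ℤ) : ZMod q) * v (f i) = 0) Ψe hchar)]
    exact card_solset q hq f a
  rw [hcount, hrk]
  congr 1
  have hNT := NT (r := m) (fun i => (a i).natAbs) (fun i => Int.natAbs_pos.2 (ha0 i)) q
  rw [← hNT]
  apply Finset.prod_congr rfl
  intro ℓ _
  congr 1
  have he : elemDiv G J ℓ = minorGcd G J ℓ / minorGcd G J (ℓ - 1) := rfl
  rw [he, hdd ℓ, hdd (ℓ - 1)]


end ArrCode
end

section
/- Let m ∈ {1,…,ρ₀}. (a) For every s ∈ {0,1,…,r(E)} there exists i ∈ {0,1,…,n} such that f_i^m is a nonzero polynomial of degree exactly s. (b) For every s ∈ {1,…,r(E)}, min{ i ∈ {0,…,n} : f_i^m is nonzero of degree s−1 } < min{ i ∈ {0,…,n} : f_i^m is nonzero of degree s } (both sets being nonempty by (a)). -/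
open scoped BigOperators

namespace ArrCode


/-! ### Auxiliary development for `stmt7` -/

variable {k n : ℕ}

/-- The `j`-th column of `G`, viewed over `ℚ`. -/
noncomputable def colQ (G : Matrix (Fin k) (Fin n) ℤ) (j : Fin n) : Fin k → ℚ :=
  fun i => (G i j : ℚ)

/-- The span over `ℚ` of the columns of `G` indexed by `J`. -/
noncomputable def colSpan (G : Matrix (Fin k) (Fin n) ℤ) (J : Finset (Fin n)) :
    Submodule ℚ (Fin k → ℚ) :=
  Submodule.span ℚ (colQ G '' (J : Set (Fin n)))

lemma rk_eq_span (G : Matrix (Fin k) (Fin n) ℤ) (J : Finset (Fin n)) :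
    rk G J = Module.finrank ℚ (colSpan G J) := by
  rw [rk, Matrix.rank_eq_finrank_span_cols, colSpan]
  have hset : Set.range (Matrix.of fun (i : Fin k) (j : J) => (G i j.1 : ℚ)).col
      = colQ G '' (J : Set (Fin n)) := by
    ext v
    constructor
    · rintro ⟨j, rfl⟩
      exact ⟨j.1, j.2, rfl⟩
    · rintro ⟨x, hx, rfl⟩
      exact ⟨⟨x, hx⟩, rfl⟩
  rw [hset]

lemma rk_mono (G : Matrix (Fin k) (Fin n) ℤ) {J K : Finset (Fin n)} (h : J ⊆ K) :
    rk G J ≤ rk G K := by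
  rw [rk_eq_span, rk_eq_span]
  exact Submodule.finrank_mono (Submodule.span_mono (Set.image_mono (by exact_mod_cast h)))

lemma rk_empty (G : Matrix (Fin k) (Fin n) ℤ) : rk G (∅ : Finset (Fin n)) = 0 := by
  rw [rk_eq_span, colSpan, Finset.coe_empty, Set.image_empty, Submodule.span_empty, finrank_bot]

lemma colSpan_insert (G : Matrix (Fin k) (Fin n) ℤ) (j : Fin n) (K : Finset (Fin n)) :
    colSpan G (insert j K) = Submodule.span ℚ {colQ G j} ⊔ colSpan G K := by
  rw [colSpan, Finset.coe_insert, Set.image_insert_eq, Submodule.span_insert, colSpan]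

lemma rk_step (G : Matrix (Fin k) (Fin n) ℤ) {K : Finset (Fin n)}
    (h : rk G K < rk G (Finset.univ : Finset (Fin n))) :
    ∃ j : Fin n, j ∉ K ∧ rk G (insert j K) = rk G K + 1 := by
  have hex : ∃ j : Fin n, colQ G j ∉ colSpan G K := by
    by_contra hc
    push_neg at hc
    have hle : colSpan G (Finset.univ : Finset (Fin n)) ≤ colSpan G K := by
      rw [colSpan, Submodule.span_le]
      rintro v ⟨x, _, rfl⟩
      exact hc x
    have := Submodule.finrank_mono hle
    rw [rk_eq_span, rk_eq_span] at h
    omega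
  obtain ⟨j, hj⟩ := hex
  have hjK : j ∉ K := fun hmem => hj (Submodule.subset_span ⟨j, hmem, rfl⟩)
  refine ⟨j, hjK, ?_⟩
  have hlt : colSpan G K < colSpan G (insert j K) := by
    rw [colSpan_insert]
    refine lt_of_le_of_ne le_sup_right fun he => ?_
    have hmem : colQ G j ∈ Submodule.span ℚ {colQ G j} ⊔ colSpan G K :=
      Submodule.mem_sup_left (Submodule.mem_span_singleton_self _)
    rw [← he] at hmem
    exact hj hmem
  have h1 : rk G K < rk G (insert j K) := by
    rw [rk_eq_span, rk_eq_span]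
    exact Submodule.finrank_lt_finrank_of_lt hlt
  have h2 : rk G (insert j K) ≤ rk G K + 1 := by
    rw [rk_eq_span, rk_eq_span, colSpan_insert]
    have := Submodule.finrank_sup_add_finrank_inf_eq (Submodule.span ℚ {colQ G j}) (colSpan G K)
    have hs : Module.finrank ℚ (Submodule.span ℚ ({colQ G j} : Set (Fin k → ℚ))) ≤ 1 := by
      simpa using finrank_span_le_card ({colQ G j} : Set (Fin k → ℚ))
    omega
  omega

/-- The maximum cardinality of a subset of columns of rank `ρ`. -/
noncomputable def maxCard (G : Matrix (Fin k) (Fin n) ℤ) (ρ : ℕ) : ℕ :=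
  ((Finset.univ : Finset (Fin n)).powerset.filter (fun K => rk G K = ρ)).sup Finset.card

lemma exists_rk (G : Matrix (Fin k) (Fin n) ℤ) {ρ : ℕ}
    (h : ρ ≤ rk G (Finset.univ : Finset (Fin n))) :
    ∃ K : Finset (Fin n), rk G K = ρ := by
  induction ρ with
  | zero => exact ⟨∅, rk_empty G⟩
  | succ ρ ih =>
    obtain ⟨K, hK⟩ := ih (by omega)
    obtain ⟨j, _, hj⟩ := rk_step G (K := K) (by omega)
    exact ⟨insert j K, by omega⟩

lemma card_le_maxCard (G : Matrix (Fin k) (Fin n) ℤ) {ρ : ℕ} {K : Finset (Fin n)}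
    (h : rk G K = ρ) : K.card ≤ maxCard G ρ :=
  Finset.le_sup (by simp [h])

lemma maxCard_attained (G : Matrix (Fin k) (Fin n) ℤ) {ρ : ℕ}
    (h : ρ ≤ rk G (Finset.univ : Finset (Fin n))) :
    ∃ K : Finset (Fin n), rk G K = ρ ∧ K.card = maxCard G ρ := by
  obtain ⟨K₀, hK₀⟩ := exists_rk G h
  have hne : (((Finset.univ : Finset (Fin n)).powerset.filter
      (fun K => rk G K = ρ))).Nonempty := ⟨K₀, by simp [hK₀]⟩
  obtain ⟨K, hK, hsup⟩ := Finset.exists_mem_eq_sup _ hne Finset.card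
  simp only [Finset.mem_filter, Finset.mem_powerset] at hK
  exact ⟨K, hK.2, hsup.symm⟩

lemma maxCard_le (G : Matrix (Fin k) (Fin n) ℤ) (ρ : ℕ) : maxCard G ρ ≤ n := by
  apply Finset.sup_le
  intro K _
  simpa using Finset.card_le_card (Finset.subset_univ K)

lemma maxCard_lt_succ (G : Matrix (Fin k) (Fin n) ℤ) {ρ : ℕ}
    (h : ρ < rk G (Finset.univ : Finset (Fin n))) :
    maxCard G ρ < maxCard G (ρ + 1) := by
  obtain ⟨K, hK, hcard⟩ := maxCard_attained G (le_of_lt h)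
  obtain ⟨j, hjK, hj⟩ := rk_step G (K := K) (by omega)
  have h1 : (insert j K).card = maxCard G ρ + 1 := by
    rw [Finset.card_insert_of_notMem hjK, hcard]
  have := card_le_maxCard G (ρ := ρ + 1) (K := insert j K) (by omega)
  omega

lemma maxCard_strictMonoOn (G : Matrix (Fin k) (Fin n) ℤ) {ρ₁ ρ₂ : ℕ}
    (h12 : ρ₁ < ρ₂) (h2 : ρ₂ ≤ rk G (Finset.univ : Finset (Fin n))) :
    maxCard G ρ₁ < maxCard G ρ₂ := by
  induction ρ₂ with
  | zero => omega
  | succ ρ ih =>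
    rcases Nat.lt_or_ge ρ₁ ρ with hlt | hge
    · exact lt_trans (ih hlt (by omega)) (maxCard_lt_succ G (by omega))
    · have : ρ₁ = ρ := by omega
      subst this
      exact maxCard_lt_succ G (by omega)

lemma gcdProd_pos (G : Matrix (Fin k) (Fin n) ℤ) {m : ℕ} (hm : 1 ≤ m)
    (J : Finset (Fin n)) : 0 < gcdProd G m J := by
  rw [gcdProd]
  exact Finset.prod_pos fun ℓ _ => Nat.gcd_pos_of_pos_left _ hm

/-- Coefficient formula for `fPoly`. -/
lemma coeff_fPoly (G : Matrix (Fin k) (Fin n) ℤ) (m i s : ℕ) :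
    (fPoly G m i).coeff s
      = ∑ K ∈ (Finset.univ : Finset (Fin n)).powerset,
          if rk G Finset.univ - rk G K = s then
            (K.card.choose (n - i) : ℚ) * ((-1 : ℚ) ^ (K.card - (n - i)) *
              (gcdProd G m K : ℚ) / (gcdProd G m Finset.univ : ℚ))
          else 0 := by
  rw [fPoly]
  rw [Polynomial.finset_sum_coeff]
  simp only [Polynomial.finset_sum_coeff, Polynomial.coeff_C_mul, Polynomial.coeff_X_pow]
  have hswap :
      (∑ J ∈ (Finset.univ : Finset (Fin n)).powerset.filter (fun J => J.card = n - i),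
        ∑ K ∈ (Finset.univ : Finset (Fin n)).powerset.filter (fun K => J ⊆ K),
          ((-1 : ℚ) ^ (K.card - J.card) *
            (gcdProd G m K : ℚ) / (gcdProd G m Finset.univ : ℚ)) *
            (if s = rk G Finset.univ - rk G K then 1 else 0))
      = ∑ K ∈ (Finset.univ : Finset (Fin n)).powerset,
          ∑ J ∈ K.powerset.filter (fun J => J.card = n - i),
            ((-1 : ℚ) ^ (K.card - J.card) *
              (gcdProd G m K : ℚ) / (gcdProd G m Finset.univ : ℚ)) *
              (if s = rk G Finset.univ - rk G K then 1 else 0) := by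
    apply Finset.sum_comm'
    intro J K
    simp only [Finset.mem_filter, Finset.mem_powerset]
    constructor
    · rintro ⟨⟨-, hcard⟩, -, hJK⟩
      exact ⟨⟨hJK, hcard⟩, Finset.subset_univ K⟩
    · rintro ⟨⟨hJK, hcard⟩, -⟩
      exact ⟨⟨Finset.subset_univ J, hcard⟩, Finset.subset_univ K, hJK⟩
  rw [hswap]
  apply Finset.sum_congr rfl
  intro K _
  have hinner :
      (∑ J ∈ K.powerset.filter (fun J => J.card = n - i),
        ((-1 : ℚ) ^ (K.card - J.card) *
          (gcdProd G m K : ℚ) / (gcdProd G m Finset.univ : ℚ)) *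
          (if s = rk G Finset.univ - rk G K then 1 else 0))
      = ∑ J ∈ K.powerset.filter (fun J => J.card = n - i),
          ((-1 : ℚ) ^ (K.card - (n - i)) *
            (gcdProd G m K : ℚ) / (gcdProd G m Finset.univ : ℚ)) *
            (if s = rk G Finset.univ - rk G K then 1 else 0) := by
    apply Finset.sum_congr rfl
    intro J hJ
    simp only [Finset.mem_filter] at hJ
    rw [hJ.2]
  rw [hinner, Finset.sum_const]
  have hcardset : (K.powerset.filter (fun J => J.card = n - i)).card = K.card.choose (n - i) := by
    rw [← Finset.powersetCard_eq_filter, Finset.card_powersetCard]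
  rw [hcardset, nsmul_eq_mul]
  by_cases hcond : rk G Finset.univ - rk G K = s
  · simp [hcond]
  · simp [hcond, Ne.symm hcond]

lemma coeff_fPoly_eq_zero_of_small (G : Matrix (Fin k) (Fin n) ℤ) (m : ℕ) {i s : ℕ}
    (hs : s ≤ rk G (Finset.univ : Finset (Fin n)))
    (hi : i < n - maxCard G (rk G (Finset.univ : Finset (Fin n)) - s)) :
    (fPoly G m i).coeff s = 0 := by
  rw [coeff_fPoly]
  apply Finset.sum_eq_zero
  intro K _
  set r := rk G (Finset.univ : Finset (Fin n)) with hr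
  by_cases hcond : r - rk G K = s
  · have hrkle : rk G K ≤ r := rk_mono G (Finset.subset_univ K)
    have hrk : rk G K = r - s := by omega
    have hcard : K.card ≤ maxCard G (r - s) := card_le_maxCard G hrk
    have hM : maxCard G (r - s) ≤ n := maxCard_le G _
    have hchoose : K.card.choose (n - i) = 0 :=
      Nat.choose_eq_zero_of_lt (by omega)
    simp [hcond, hchoose]
  · simp [hcond]

lemma coeff_fPoly_pos (G : Matrix (Fin k) (Fin n) ℤ) {m : ℕ} (hm : 1 ≤ m) {s : ℕ}
    (hs : s ≤ rk G (Finset.univ : Finset (Fin n))) :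
    0 < (fPoly G m (n - maxCard G (rk G (Finset.univ : Finset (Fin n)) - s))).coeff s := by
  set r := rk G (Finset.univ : Finset (Fin n)) with hr
  set M := maxCard G (r - s) with hM
  have hMn : M ≤ n := maxCard_le G _
  have hni : n - (n - M) = M := by omega
  rw [coeff_fPoly]
  obtain ⟨K₀, hK₀rk, hK₀card⟩ := maxCard_attained G (ρ := r - s) (by omega)
  apply Finset.sum_pos'
  · intro K _
    by_cases hcond : r - rk G K = s
    · have hrkle : rk G K ≤ r := rk_mono G (Finset.subset_univ K)
      have hrk : rk G K = r - s := by omega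
      have hcard : K.card ≤ M := card_le_maxCard G hrk
      rcases Nat.lt_or_ge K.card M with hlt | hge
      · have hchoose : K.card.choose (n - (n - M)) = 0 := by
          rw [hni]; exact Nat.choose_eq_zero_of_lt hlt
        simp [hcond, hchoose]
      · have hKM : K.card = M := by omega
        rw [if_pos hcond, hni, hKM, Nat.choose_self, Nat.sub_self, pow_zero]
        positivity
    · exact le_of_eq (if_neg hcond).symm
  · refine ⟨K₀, Finset.mem_powerset.2 (Finset.subset_univ _), ?_⟩
    have hcond : r - rk G K₀ = s := by omega
    rw [← hM] at hK₀card
    rw [if_pos hcond, hni, hK₀card, Nat.choose_self, Nat.sub_self, pow_zero]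
    have hga : (0:ℚ) < (gcdProd G m K₀ : ℚ) := by
      exact_mod_cast gcdProd_pos G hm K₀
    have hgb : (0:ℚ) < (gcdProd G m Finset.univ : ℚ) := by
      exact_mod_cast gcdProd_pos G hm Finset.univ
    have hdiv := div_pos hga hgb
    simpa using hdiv

lemma coeff_fPoly_eq_zero_of_big (G : Matrix (Fin k) (Fin n) ℤ) (m : ℕ) {i s : ℕ}
    (hs : rk G (Finset.univ : Finset (Fin n)) < s) :
    (fPoly G m i).coeff s = 0 := by
  rw [coeff_fPoly]
  apply Finset.sum_eq_zero
  intro K _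
  have : rk G Finset.univ - rk G K ≠ s := by omega
  simp [this]

/-- The polynomial `fPoly G m (n - maxCard G (r - s))` is nonzero of degree exactly `s`. -/
lemma fPoly_natDegree_eq (G : Matrix (Fin k) (Fin n) ℤ) {m : ℕ} (hm : 1 ≤ m) {s : ℕ}
    (hs : s ≤ rk G (Finset.univ : Finset (Fin n))) :
    fPoly G m (n - maxCard G (rk G (Finset.univ : Finset (Fin n)) - s)) ≠ 0 ∧
    (fPoly G m (n - maxCard G (rk G (Finset.univ : Finset (Fin n)) - s))).natDegree = s := by
  have hpos := coeff_fPoly_pos G hm hs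
  have hne : fPoly G m (n - maxCard G (rk G Finset.univ - s)) ≠ 0 := fun h0 => by
    rw [h0] at hpos; simp at hpos
  refine ⟨hne, le_antisymm ?_ (Polynomial.le_natDegree_of_ne_zero (ne_of_gt hpos))⟩
  rw [Polynomial.natDegree_le_iff_coeff_eq_zero]
  intro N hN
  rcases Nat.lt_or_ge (rk G (Finset.univ : Finset (Fin n))) N with hbig | hsmall
  · exact coeff_fPoly_eq_zero_of_big G m hbig
  · apply coeff_fPoly_eq_zero_of_small G m hsmall
    have hmono : maxCard G (rk G (Finset.univ : Finset (Fin n)) - N)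
        < maxCard G (rk G (Finset.univ : Finset (Fin n)) - s) :=
      maxCard_strictMonoOn G (by omega) (by omega)
    have h1 : maxCard G (rk G (Finset.univ : Finset (Fin n)) - s) ≤ n := maxCard_le G _
    omega

lemma fPoly_min_bound (G : Matrix (Fin k) (Fin n) ℤ) (m : ℕ) {i s : ℕ}
    (hs : s ≤ rk G (Finset.univ : Finset (Fin n)))
    (hne : fPoly G m i ≠ 0) (hdeg : (fPoly G m i).natDegree = s) :
    n - maxCard G (rk G (Finset.univ : Finset (Fin n)) - s) ≤ i := by
  by_contra hc
  push_neg at hc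
  have h0 : (fPoly G m i).coeff s = 0 := coeff_fPoly_eq_zero_of_small G m hs hc
  rw [← hdeg] at h0
  exact (Polynomial.leadingCoeff_ne_zero.mpr hne) h0

lemma fPoly_sInf_eq (G : Matrix (Fin k) (Fin n) ℤ) {m : ℕ} (hm : 1 ≤ m) {s : ℕ}
    (hs : s ≤ rk G (Finset.univ : Finset (Fin n))) :
    sInf {i : ℕ | i ≤ n ∧ fPoly G m i ≠ 0 ∧ (fPoly G m i).natDegree = s}
      = n - maxCard G (rk G (Finset.univ : Finset (Fin n)) - s) := by
  apply IsLeast.csInf_eq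
  constructor
  · obtain ⟨h1, h2⟩ := fPoly_natDegree_eq G hm hs
    exact ⟨by omega, h1, h2⟩
  · rintro i ⟨-, hne, hdeg⟩
    exact fPoly_min_bound G m hs hne hdeg

theorem stmt7 (k n : ℕ) (hk : 1 ≤ k) (hn : 1 ≤ n) (G : Matrix (Fin k) (Fin n) ℤ)
    (hG : ∀ j : Fin n, ∃ i : Fin k, G i j ≠ 0)
    (m : ℕ) (hm1 : 1 ≤ m) (hm2 : m ≤ lcmPeriod G) :
    (∀ s ≤ rk G Finset.univ, ∃ i ≤ n,
        fPoly G m i ≠ 0 ∧ (fPoly G m i).natDegree = s) ∧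
    (∀ s : ℕ, 1 ≤ s → s ≤ rk G Finset.univ →
        sInf {i : ℕ | i ≤ n ∧ fPoly G m i ≠ 0 ∧ (fPoly G m i).natDegree = s - 1} <
        sInf {i : ℕ | i ≤ n ∧ fPoly G m i ≠ 0 ∧ (fPoly G m i).natDegree = s}) := by
  constructor
  · intro s hs
    refine ⟨n - maxCard G (rk G Finset.univ - s), by omega, ?_⟩
    exact fPoly_natDegree_eq G hm1 hs
  · intro s hs1 hs2
    rw [fPoly_sInf_eq G hm1 (by omega : s - 1 ≤ rk G Finset.univ),
        fPoly_sInf_eq G hm1 hs2]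
    set r := rk G Finset.univ with hr
    have h1 : r - (s - 1) = (r - s) + 1 := by omega
    have h2 : maxCard G (r - s) < maxCard G (r - s + 1) :=
      maxCard_strictMonoOn G (by omega) (by omega)
    have h3 : maxCard G (r - s + 1) ≤ n := maxCard_le G _
    rw [h1]
    omega

end ArrCode
end
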